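/- Let X be a topological space. If for every continuous map χ : X → V there exists a continuous map λ : X → I₀¹ with π ∘ λ = χ, then X is a normal space. -/

import Mathlib

open unitInterval

/-- The interval with doubled endpoints: `[0,1]` together with extra points
`0' = Sum.inr false` and `1' = Sum.inr true`, with `0 ⤳ 0'` and `1 ⤳ 1'`. -/
def I01 : Type := unitInterval ⊕ Bool

instance : TopologicalSpace I01 where
  IsOpen U := IsOpen (Sum.inl ⁻¹' U : Set unitInterval) ∧
    (Sum.inr false ∈ U → Sum.inl (0 : unitInterval) ∈ U) ∧
    (Sum.inr true ∈ U → Sum.inl (1 : unitInterval) ∈ U)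
  isOpen_univ := ⟨isOpen_univ, fun _ => trivial, fun _ => trivial⟩
  isOpen_inter U V hU hV := ⟨hU.1.inter hV.1,
    fun h => ⟨hU.2.1 h.1, hV.2.1 h.2⟩, fun h => ⟨hU.2.2 h.1, hV.2.2 h.2⟩⟩
  isOpen_sUnion S hS := by
    refine ⟨?_, ?_, ?_⟩
    · have e : (Sum.inl ⁻¹' ⋃₀ S : Set unitInterval) = ⋃ U ∈ S, (Sum.inl ⁻¹' U : Set unitInterval) :=
        Set.preimage_sUnion
      have h2 : IsOpen (⋃ U ∈ S, (Sum.inl ⁻¹' U : Set unitInterval)) :=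
        isOpen_biUnion fun U hU => (hS U hU).1
      rw [← e] at h2
      exact h2
    · rintro ⟨U, hU, hmem⟩
      exact ⟨U, hU, (hS U hU).2.1 hmem⟩
    · rintro ⟨U, hU, hmem⟩
      exact ⟨U, hU, (hS U hU).2.2 hmem⟩

/-- The three-point space with an open point `c` and two closed points `L`, `R`. -/
inductive V : Type
  | L | c | R

instance : TopologicalSpace V where
  IsOpen U := (V.L ∈ U → V.c ∈ U) ∧ (V.R ∈ U → V.c ∈ U)
  isOpen_univ := ⟨fun _ => trivial, fun _ => trivial⟩
  isOpen_inter U W hU hW := ⟨fun h => ⟨hU.1 h.1, hW.1 h.2⟩, fun h => ⟨hU.2 h.1, hW.2 h.2⟩⟩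
  isOpen_sUnion S hS := by
    constructor
    · rintro ⟨U, hU, hmem⟩
      exact ⟨U, hU, (hS U hU).1 hmem⟩
    · rintro ⟨U, hU, hmem⟩
      exact ⟨U, hU, (hS U hU).2 hmem⟩

/-- The map `π : I₀¹ → V` collapsing `[0,1]` to the open point `c`. -/
def pi1 : I01 → V
  | Sum.inl _ => V.c
  | Sum.inr false => V.L
  | Sum.inr true => V.R

/-- The map `ι : I₀¹ → [0,1]` collapsing the doubled endpoints. -/
def iota : I01 → unitInterval
  | Sum.inl x => x
  | Sum.inr false => 0
  | Sum.inr true => 1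


lemma iota_continuous : Continuous iota := by
  rw [continuous_def]
  intro U hU
  exact ⟨hU, fun h => h, fun h => h⟩

/-- if every continuous `χ : X → V` lifts through `π : I₀¹ → V`, then `X`
is a normal space. -/
theorem normal_of_lifts (X : Type) [TopologicalSpace X]
    (h : ∀ χ : X → V, Continuous χ →
      ∃ lam : X → I01, Continuous lam ∧ pi1 ∘ lam = χ) :
    NormalSpace X := by
  constructor
  intro A B hA hB hAB
  classical
  set χ : X → V := fun x => if x ∈ A then V.L else if x ∈ B then V.R else V.c with hχ
  have hcont : Continuous χ := by
    rw [continuous_def]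
    intro U hU
    by_cases hc : V.c ∈ U
    · by_cases hL : V.L ∈ U <;> by_cases hR : V.R ∈ U
      · have : χ ⁻¹' U = Set.univ := by
          ext x; simp only [hχ, Set.mem_preimage, Set.mem_univ, iff_true]
          split_ifs <;> assumption
        rw [this]; exact isOpen_univ
      · have : χ ⁻¹' U = Bᶜ := by
          ext x; simp only [hχ, Set.mem_preimage, Set.mem_compl_iff]
          split_ifs with h1 h2
          · simp only [hL, true_iff]
            exact fun hxB => (hAB.le_bot ⟨h1, hxB⟩)
          · simp [hR, h2]
          · simp [hc, h2]
        rw [this]; exact hB.isOpen_compl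
      · have : χ ⁻¹' U = Aᶜ := by
          ext x; simp only [hχ, Set.mem_preimage, Set.mem_compl_iff]
          split_ifs with h1 h2
          · simp [hL, h1]
          · simp only [hR, true_iff]; exact fun hxA => absurd hxA h1
          · simp [hc, h1]
        rw [this]; exact hA.isOpen_compl
      · have : χ ⁻¹' U = (A ∪ B)ᶜ := by
          ext x; simp only [hχ, Set.mem_preimage, Set.mem_compl_iff, Set.mem_union]
          split_ifs with h1 h2
          · simp [hL, h1]
          · simp [hR, h2]
          · simp [hc, h1, h2]
        rw [this]; exact (hA.union hB).isOpen_compl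
    · have hL : V.L ∉ U := fun hL => hc (hU.1 hL)
      have hR : V.R ∉ U := fun hR => hc (hU.2 hR)
      have : χ ⁻¹' U = ∅ := by
        ext x; simp only [hχ, Set.mem_preimage, Set.mem_empty_iff_false, iff_false]
        split_ifs <;> assumption
      rw [this]; exact isOpen_empty
  obtain ⟨lam, hlam, hcomm⟩ := h χ hcont
  set g : X → ℝ := fun x => (iota (lam x) : ℝ) with hg
  have hgc : Continuous g := continuous_subtype_val.comp (iota_continuous.comp hlam)
  have hgA : ∀ a ∈ A, g a = 0 := by
    intro a ha
    have hπ : pi1 (lam a) = V.L := by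
      have := congrFun hcomm a
      simp only [Function.comp_apply, hχ] at this
      rw [this, if_pos ha]
    match hl : lam a with
    | Sum.inl x => rw [hl] at hπ; exact absurd hπ (by simp [pi1])
    | Sum.inr true => rw [hl] at hπ; exact absurd hπ (by simp [pi1])
    | Sum.inr false => simp [hg, hl, iota]
  have hgB : ∀ b ∈ B, g b = 1 := by
    intro b hb
    have hπ : pi1 (lam b) = V.R := by
      have := congrFun hcomm b
      simp only [Function.comp_apply, hχ] at this
      rw [this, if_neg (fun hbA => hAB.le_bot ⟨hbA, hb⟩), if_pos hb]
    match hl : lam b with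
    | Sum.inl x => rw [hl] at hπ; exact absurd hπ (by simp [pi1])
    | Sum.inr false => rw [hl] at hπ; exact absurd hπ (by simp [pi1])
    | Sum.inr true => simp [hg, hl, iota]
  refine ⟨g ⁻¹' Set.Iio (1/2), g ⁻¹' Set.Ioi (1/2),
    hgc.isOpen_preimage _ isOpen_Iio, hgc.isOpen_preimage _ isOpen_Ioi,
    fun a ha => ?_, fun b hb => ?_, ?_⟩
  · simp [Set.mem_preimage, hgA a ha]
  · simp only [Set.mem_preimage, hgB b hb, Set.mem_Ioi]; norm_num
  · refine Set.disjoint_left.2 fun x hx hx' => ?_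
    have h1 : g x < 1/2 := hx
    have h2 : (1/2 : ℝ) < g x := hx'
    linarith
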